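/- arXiv:2301.05584 — 2 statements merged into one kernel-verified Lean document; each statement's English description precedes it below -/
import Mathlib

section
/- Let n ≥ 1, 1 ≤ m ≤ n, and let M_1, …, M_m be positive integers with |M| = M_1+…+M_m, and set μ = |M|^{|M|}/(M_1^{M_1}⋯M_m^{M_m}). Then there exist constants c, C > 0 such that for all integers l ≥ 0: c·(l+1)^{(m+1)/2 − n}·μ^{−l} ≤ (M_1 l)!·(M_2 l)!⋯(M_m l)! / (n − 1 + |M|·l)! ≤ C·(l+1)^{(m+1)/2 − n}·μ^{−l}. -/
open Filter Real Topology

lemma aux_bounds (h : ℕ → ℝ) (L : ℝ) (hL : 0 < L) (hpos : ∀ l, 0 < h l)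
    (ht : Tendsto h atTop (nhds L)) :
    ∃ c C : ℝ, 0 < c ∧ 0 < C ∧ ∀ l, c ≤ h l ∧ h l ≤ C := by
  have h1 : ∀ᶠ l in atTop, L/2 ≤ h l ∧ h l ≤ L + 1 := by
    filter_upwards [ht.eventually (eventually_ge_nhds (by linarith : L/2 < L)),
      ht.eventually (eventually_le_nhds (by linarith : L < L + 1))] with l hl hl'
    exact ⟨hl, hl'⟩
  obtain ⟨N, hN⟩ := eventually_atTop.mp h1
  have hne : (Finset.range (N+1)).Nonempty := ⟨0, by simp⟩
  refine ⟨min (L/2) ((Finset.range (N+1)).inf' hne h),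
    max (L+1) ((Finset.range (N+1)).sup' hne h), ?_, ?_, ?_⟩
  · exact lt_min (by linarith) ((Finset.lt_inf'_iff _).2 fun b _ => hpos b)
  · exact lt_max_of_lt_left (by linarith)
  · intro l
    rcases le_or_gt l N with hlN | hlN
    · have hmem : l ∈ Finset.range (N+1) := Finset.mem_range.2 (by omega)
      exact ⟨(min_le_right _ _).trans (Finset.inf'_le _ hmem),
        (Finset.le_sup' _ hmem).trans (le_max_right _ _)⟩
    · exact ⟨(min_le_left _ _).trans (hN l hlN.le).1, (hN l hlN.le).2.trans (le_max_left _ _)⟩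

lemma log_factorial_eq (k : ℕ) (hk : 1 ≤ k) :
    Real.log (k.factorial : ℝ) = Real.log (Stirling.stirlingSeq k) + 1/2 * Real.log (2*k)
      + k * (Real.log k - 1) := by
  have h := Stirling.log_stirlingSeq_formula k
  have hk0 : (k:ℝ) ≠ 0 := Nat.cast_ne_zero.2 (by omega)
  rw [Real.log_div hk0 (Real.exp_ne_zero 1), Real.log_exp] at h
  linarith

lemma tendsto_const_div_zero (a : ℝ) : Tendsto (fun x : ℝ => a/x) atTop (𝓝 0) := by
  simpa using ((tendsto_inv_atTop_zero).const_mul a).congr (fun x => by rw [div_eq_mul_inv])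

lemma tendsto_linear_div (p q r s : ℝ) (hr : 0 < r) :
    Tendsto (fun x : ℝ => (p*x + q)/(r*x + s)) atTop (𝓝 (p/r)) := by
  have h1 : Tendsto (fun x : ℝ => p + q/x) atTop (𝓝 p) := by
    simpa using tendsto_const_nhds.add (tendsto_const_div_zero q)
  have h2 : Tendsto (fun x : ℝ => r + s/x) atTop (𝓝 r) := by
    simpa using tendsto_const_nhds.add (tendsto_const_div_zero s)
  apply (h1.div h2 hr.ne').congr'
  filter_upwards [eventually_gt_atTop 0,
    (tendsto_const_div_zero s).eventually (eventually_gt_nhds (by linarith : -(r/2) < 0))]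
    with x hx hsx
  have hd : 0 < r + s/x := by linarith
  simp only [Pi.div_apply]
  have hrxs : 0 < r*x + s := by
    have h := mul_pos hx hd
    have h2 : x*(r + s/x) = r*x + s := by field_simp
    linarith
  rw [div_eq_div_iff hd.ne' hrxs.ne']
  field_simp

lemma tendsto_mul_log_piece (a : ℝ) :
    Tendsto (fun y : ℝ => y * Real.log ((y + a)/y)) atTop (𝓝 a) := by
  have h := tendsto_one_add_div_rpow_exp a
  have h2 : Tendsto (fun y : ℝ => Real.log ((1 + a/y) ^ y)) atTop (𝓝 a) := by
    have := (Real.continuousAt_log (Real.exp_pos a).ne').tendsto.comp h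
    simpa [Real.log_exp, Function.comp_def] using this
  apply h2.congr'
  filter_upwards [eventually_gt_atTop 0,
    (tendsto_const_div_zero a).eventually (eventually_gt_nhds (by norm_num : (-2⁻¹:ℝ) < 0))]
    with y hy hay
  have hb : 0 < 1 + a/y := by linarith
  rw [Real.log_rpow hb]
  congr 1
  rw [add_div, div_self hy.ne']

/-- two-sided Stirling-type estimate: with `|M| = M₁+…+M_m` and
`μ = |M|^{|M|}/(M₁^{M₁}⋯M_m^{M_m})`, one has
`(M₁l)!⋯(M_ml)!/(n-1+|M|·l)! ≍ (l+1)^{(m+1)/2-n}·μ^{-l}`. -/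
theorem stmt_5 (n m : ℕ) (hn : 1 ≤ n) (hm : 1 ≤ m) (hmn : m ≤ n)
    (M : Fin m → ℕ) (hM : ∀ i, 1 ≤ M i) :
    ∃ c C : ℝ, 0 < c ∧ 0 < C ∧ ∀ l : ℕ,
      c * ((l : ℝ) + 1) ^ (((m : ℝ) + 1) / 2 - n) *
          ((((∑ i, M i) ^ (∑ i, M i) : ℕ) : ℝ) / ∏ i, ((M i : ℝ) ^ M i)) ^ (-(l : ℝ)) ≤
        (∏ i, (((M i * l).factorial : ℕ) : ℝ)) / (((n - 1 + (∑ i, M i) * l).factorial : ℕ) : ℝ) ∧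
      (∏ i, (((M i * l).factorial : ℕ) : ℝ)) / (((n - 1 + (∑ i, M i) * l).factorial : ℕ) : ℝ) ≤
        C * ((l : ℝ) + 1) ^ (((m : ℝ) + 1) / 2 - n) *
          ((((∑ i, M i) ^ (∑ i, M i) : ℕ) : ℝ) / ∏ i, ((M i : ℝ) ^ M i)) ^ (-(l : ℝ)) := by
  set S : ℕ := ∑ i, M i with hSdef
  have hS1 : 1 ≤ S := by
    calc 1 ≤ m := hm
    _ = ∑ _i : Fin m, 1 := by simp
    _ ≤ S := Finset.sum_le_sum fun i _ => hM i
  have hS0 : (0:ℝ) < (S:ℝ) := by exact_mod_cast hS1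
  have hSsum : (∑ i, (M i : ℝ)) = (S:ℝ) := by rw [hSdef]; push_cast; rfl
  have hMpos : ∀ i, (0:ℝ) < (M i : ℝ) := fun i => by exact_mod_cast hM i
  set P : ℝ := ∏ i, ((M i : ℝ) ^ M i) with hPdef
  have hP : 0 < P := Finset.prod_pos fun i _ => pow_pos (hMpos i) _
  set μ : ℝ := (((S ^ S : ℕ) : ℝ)) / P with hμdef
  have hμ : 0 < μ := div_pos (by positivity) hP
  set E : ℝ := ((m : ℝ) + 1) / 2 - n with hEdef
  set g : ℕ → ℝ := fun l => ((l:ℝ)+1) ^ E * μ ^ (-(l:ℝ)) with hgdef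
  have hg : ∀ l, 0 < g l := fun l =>
    mul_pos (Real.rpow_pos_of_pos (by positivity) _) (Real.rpow_pos_of_pos hμ _)
  set f : ℕ → ℝ := fun l =>
    (∏ i, (((M i * l).factorial : ℕ) : ℝ)) / (((n - 1 + S * l).factorial : ℕ) : ℝ) with hfdef
  have hf : ∀ l, 0 < f l := fun l => div_pos
    (Finset.prod_pos fun i _ => by exact_mod_cast (M i * l).factorial_pos)
    (by exact_mod_cast (n - 1 + S * l).factorial_pos)
  set h : ℕ → ℝ := fun l => f l / g l with hhdef
  have hhpos : ∀ l, 0 < h l := fun l => div_pos (hf l) (hg l)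
  -- the limit
  have h1n : (1:ℝ) ≤ (n:ℝ) := by exact_mod_cast hn
  have hmain : ∃ L : ℝ, 0 < L ∧ Tendsto h atTop (𝓝 L) := by
    set Φ : ℝ → ℝ := fun x =>
      (((n:ℝ)-1) + ((m:ℝ)/2 - 1/2) * Real.log 2 + 1/2 * (∑ i, Real.log (M i : ℝ)))
      + (m:ℝ)/2 * Real.log (x/(x+1))
      + 1/2 * Real.log ((x+1)/((S:ℝ)*x+((n:ℝ)-1)))
      + ((n:ℝ)-1) * Real.log ((x+1)/((S:ℝ)*x))
      - ((S:ℝ)*x+((n:ℝ)-1)) * Real.log (((S:ℝ)*x+((n:ℝ)-1))/((S:ℝ)*x)) with hΦdef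
    have t1 : Tendsto (fun x : ℝ => Real.log (x/(x+1))) atTop (𝓝 0) := by
      have h0 : Tendsto (fun x : ℝ => x/(x+1)) atTop (𝓝 ((1:ℝ)/1)) :=
        (tendsto_linear_div 1 0 1 1 one_pos).congr (fun x => by norm_num)
      have h2 := (Real.continuousAt_log (by norm_num : (1:ℝ)/1 ≠ 0)).tendsto.comp h0
      simpa [Function.comp_def] using h2
    have t2 : Tendsto (fun x : ℝ => Real.log ((x+1)/((S:ℝ)*x+((n:ℝ)-1)))) atTop
        (𝓝 (Real.log (1/(S:ℝ)))) := by
      have h0 : Tendsto (fun x : ℝ => (x+1)/((S:ℝ)*x+((n:ℝ)-1))) atTop (𝓝 ((1:ℝ)/(S:ℝ))) :=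
        (tendsto_linear_div 1 1 (S:ℝ) ((n:ℝ)-1) hS0).congr (fun x => by norm_num)
      exact (Real.continuousAt_log (by positivity : (1:ℝ)/(S:ℝ) ≠ 0)).tendsto.comp h0
    have t3 : Tendsto (fun x : ℝ => Real.log ((x+1)/((S:ℝ)*x))) atTop
        (𝓝 (Real.log (1/(S:ℝ)))) := by
      have h0 : Tendsto (fun x : ℝ => (x+1)/((S:ℝ)*x)) atTop (𝓝 ((1:ℝ)/(S:ℝ))) :=
        (tendsto_linear_div 1 1 (S:ℝ) 0 hS0).congr (fun x => by rw [one_mul, add_zero])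
      exact (Real.continuousAt_log (by positivity : (1:ℝ)/(S:ℝ) ≠ 0)).tendsto.comp h0
    have hSx : Tendsto (fun x : ℝ => (S:ℝ)*x) atTop atTop :=
      Tendsto.const_mul_atTop hS0 tendsto_id
    have t4a : Tendsto (fun x : ℝ =>
        ((S:ℝ)*x) * Real.log (((S:ℝ)*x+((n:ℝ)-1))/((S:ℝ)*x))) atTop (𝓝 ((n:ℝ)-1)) :=
      (tendsto_mul_log_piece ((n:ℝ)-1)).comp hSx
    have t4b : Tendsto (fun x : ℝ =>
        Real.log (((S:ℝ)*x+((n:ℝ)-1))/((S:ℝ)*x))) atTop (𝓝 0) := by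
      have h0 : Tendsto (fun x : ℝ => ((S:ℝ)*x+((n:ℝ)-1))/((S:ℝ)*x)) atTop
          (𝓝 ((S:ℝ)/(S:ℝ))) :=
        (tendsto_linear_div (S:ℝ) ((n:ℝ)-1) (S:ℝ) 0 hS0).congr (fun x => by rw [add_zero])
      rw [div_self hS0.ne'] at h0
      have h2 := (Real.continuousAt_log one_ne_zero).tendsto.comp h0
      simpa [Function.comp_def] using h2
    have t4 : Tendsto (fun x : ℝ =>
        ((S:ℝ)*x+((n:ℝ)-1)) * Real.log (((S:ℝ)*x+((n:ℝ)-1))/((S:ℝ)*x))) atTop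
        (𝓝 (((n:ℝ)-1) + ((n:ℝ)-1)*0)) :=
      (t4a.add (t4b.const_mul ((n:ℝ)-1))).congr (fun x => by ring)
    have hΦten : Tendsto Φ atTop (𝓝 ((((n:ℝ)-1) + ((m:ℝ)/2 - 1/2) * Real.log 2
        + 1/2 * (∑ i, Real.log (M i : ℝ)) + (m:ℝ)/2 * 0 + 1/2 * Real.log (1/(S:ℝ))
        + ((n:ℝ)-1) * Real.log (1/(S:ℝ))) - (((n:ℝ)-1) + ((n:ℝ)-1)*0))) := by
      rw [hΦdef]
      exact ((((tendsto_const_nhds.add (t1.const_mul ((m:ℝ)/2))).add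
        (t2.const_mul (1/2))).add (t3.const_mul ((n:ℝ)-1))).sub t4)
    have hsp : (0:ℝ) < Real.sqrt Real.pi := Real.sqrt_pos.mpr Real.pi_pos
    have hlogstir : Tendsto (fun k : ℕ => Real.log (Stirling.stirlingSeq k)) atTop
        (𝓝 (Real.log (Real.sqrt Real.pi))) :=
      (Real.continuousAt_log hsp.ne').tendsto.comp Stirling.tendsto_stirlingSeq_sqrt_pi
    have hnum : Tendsto (fun l : ℕ => ∑ i, Real.log (Stirling.stirlingSeq (M i * l))) atTop
        (𝓝 (∑ _i : Fin m, Real.log (Real.sqrt Real.pi))) := by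
      apply tendsto_finset_sum
      intro i _
      exact hlogstir.comp (tendsto_atTop_mono
        (fun l => Nat.le_mul_of_pos_left l (hM i)) tendsto_id)
    have hden : Tendsto (fun l : ℕ => Real.log (Stirling.stirlingSeq (n - 1 + S * l))) atTop
        (𝓝 (Real.log (Real.sqrt Real.pi))) :=
      hlogstir.comp (tendsto_atTop_mono
        (fun l => le_trans (Nat.le_mul_of_pos_left l hS1) (Nat.le_add_left _ _)) tendsto_id)
    have hTten : Tendsto (fun l : ℕ =>
        (∑ i, Real.log (Stirling.stirlingSeq (M i * l)))
          - Real.log (Stirling.stirlingSeq (n - 1 + S * l)) + Φ l) atTop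
        (𝓝 ((∑ _i : Fin m, Real.log (Real.sqrt Real.pi)) - Real.log (Real.sqrt Real.pi)
          + ((((n:ℝ)-1) + ((m:ℝ)/2 - 1/2) * Real.log 2
          + 1/2 * (∑ i, Real.log (M i : ℝ)) + (m:ℝ)/2 * 0 + 1/2 * Real.log (1/(S:ℝ))
          + ((n:ℝ)-1) * Real.log (1/(S:ℝ))) - (((n:ℝ)-1) + ((n:ℝ)-1)*0)))) :=
      (hnum.sub hden).add (hΦten.comp tendsto_natCast_atTop_atTop)
    have heq : ∀ᶠ l : ℕ in atTop, Real.log (h l) =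
        (∑ i, Real.log (Stirling.stirlingSeq (M i * l)))
          - Real.log (Stirling.stirlingSeq (n - 1 + S * l)) + Φ l := by
      filter_upwards [eventually_ge_atTop 1] with l hl
      have hx0 : (0:ℝ) < (l:ℝ) := by exact_mod_cast hl
      have hkl : ∀ i, 1 ≤ M i * l := fun i => Nat.mul_pos (hM i) hl
      have hNl1 : 1 ≤ n - 1 + S * l := by have := Nat.mul_pos hS1 hl; omega
      have hNcast : ((n - 1 + S * l : ℕ) : ℝ) = (S:ℝ)*(l:ℝ) + ((n:ℝ)-1) := by
        have hc : ((n - 1 : ℕ):ℝ) = (n:ℝ) - 1 := by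
          rw [Nat.cast_sub hn]; norm_num
        push_cast [hc]; ring
      have hSN : (0:ℝ) < (S:ℝ)*(l:ℝ) + ((n:ℝ)-1) := by nlinarith [mul_pos hS0 hx0]
      have e2 : Real.log (g l) = E * Real.log ((l:ℝ)+1) + (-(l:ℝ)) * Real.log μ := by
        show Real.log (((l:ℝ)+1) ^ E * μ ^ (-(l:ℝ))) = _
        rw [Real.log_mul (Real.rpow_pos_of_pos (by positivity) _).ne'
          (Real.rpow_pos_of_pos hμ _).ne',
          Real.log_rpow (by positivity), Real.log_rpow hμ]
      have e3 : Real.log μ = (S:ℝ) * Real.log (S:ℝ) - ∑ i, (M i:ℝ) * Real.log (M i:ℝ) := by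
        rw [hμdef, Real.log_div (by positivity) hP.ne', hPdef,
          Real.log_prod (fun i _ => (pow_pos (hMpos i) _).ne')]
        push_cast
        rw [Real.log_pow]
        simp_rw [Real.log_pow]
      have e4 : Real.log (f l) = (∑ i, Real.log (((M i * l).factorial : ℝ)))
          - Real.log (((n-1+S*l).factorial : ℝ)) := by
        show Real.log ((∏ i, (((M i * l).factorial : ℕ) : ℝ))
            / (((n - 1 + S * l).factorial : ℕ) : ℝ)) = _
        rw [Real.log_div (Finset.prod_ne_zero_iff.2 fun i _ =>
            Nat.cast_ne_zero.2 (M i * l).factorial_ne_zero)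
            (Nat.cast_ne_zero.2 (n-1+S*l).factorial_ne_zero),
          Real.log_prod (fun i _ => Nat.cast_ne_zero.2 (M i * l).factorial_ne_zero)]
      have e5 : ∀ i : Fin m, Real.log (((M i * l).factorial : ℝ))
          = Real.log (Stirling.stirlingSeq (M i * l))
            + 1/2 * (Real.log 2 + (Real.log (M i:ℝ) + Real.log (l:ℝ)))
            + (M i:ℝ)*(l:ℝ) * ((Real.log (M i:ℝ) + Real.log (l:ℝ)) - 1) := by
        intro i
        have hc : ((M i * l : ℕ):ℝ) = (M i:ℝ)*(l:ℝ) := by push_cast; ring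
        have hlf := log_factorial_eq (M i * l) (hkl i)
        rw [hc] at hlf
        rw [hlf, Real.log_mul two_ne_zero (mul_pos (hMpos i) hx0).ne',
          Real.log_mul (hMpos i).ne' hx0.ne']
      have e6 : Real.log (((n-1+S*l).factorial : ℝ))
          = Real.log (Stirling.stirlingSeq (n-1+S*l))
            + 1/2 * (Real.log 2 + Real.log ((S:ℝ)*(l:ℝ)+((n:ℝ)-1)))
            + ((S:ℝ)*(l:ℝ)+((n:ℝ)-1)) * (Real.log ((S:ℝ)*(l:ℝ)+((n:ℝ)-1)) - 1) := by
        have hlf := log_factorial_eq _ hNl1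
        rw [hNcast] at hlf
        rw [hlf, Real.log_mul two_ne_zero hSN.ne']
      have e14 : (∑ i, (Real.log (Stirling.stirlingSeq (M i * l))
            + 1/2 * (Real.log 2 + (Real.log (M i:ℝ) + Real.log (l:ℝ)))
            + (M i:ℝ)*(l:ℝ) * ((Real.log (M i:ℝ) + Real.log (l:ℝ)) - 1)))
          = (∑ i, Real.log (Stirling.stirlingSeq (M i * l)))
            + (m:ℝ)/2 * (Real.log 2 + Real.log (l:ℝ)) + 1/2 * (∑ i, Real.log (M i:ℝ))
            + (l:ℝ) * (∑ i, (M i:ℝ) * Real.log (M i:ℝ))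
            + (S:ℝ)*(l:ℝ)*(Real.log (l:ℝ) - 1) := by
        have hre : ∀ i : Fin m, Real.log (Stirling.stirlingSeq (M i * l))
            + 1/2 * (Real.log 2 + (Real.log (M i:ℝ) + Real.log (l:ℝ)))
            + (M i:ℝ)*(l:ℝ) * ((Real.log (M i:ℝ) + Real.log (l:ℝ)) - 1)
            = Real.log (Stirling.stirlingSeq (M i * l))
              + (1/2 * (Real.log 2 + Real.log (l:ℝ))
              + (1/2 * Real.log (M i:ℝ)
              + ((l:ℝ) * ((M i:ℝ) * Real.log (M i:ℝ))
              + (M i:ℝ) * ((l:ℝ) * (Real.log (l:ℝ) - 1))))) := fun i => by ring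
        rw [Finset.sum_congr rfl (fun i _ => hre i), Finset.sum_add_distrib,
          Finset.sum_add_distrib, Finset.sum_add_distrib, Finset.sum_add_distrib,
          Finset.sum_const, ← Finset.mul_sum, ← Finset.mul_sum, ← Finset.sum_mul, hSsum]
        simp only [Finset.card_univ, Fintype.card_fin, nsmul_eq_mul]
        ring
      have e10 : Real.log ((l:ℝ)/((l:ℝ)+1)) = Real.log (l:ℝ) - Real.log ((l:ℝ)+1) :=
        Real.log_div hx0.ne' (by positivity)
      have e11 : Real.log (((l:ℝ)+1)/((S:ℝ)*(l:ℝ)+((n:ℝ)-1)))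
          = Real.log ((l:ℝ)+1) - Real.log ((S:ℝ)*(l:ℝ)+((n:ℝ)-1)) :=
        Real.log_div (by positivity) hSN.ne'
      have e12 : Real.log (((l:ℝ)+1)/((S:ℝ)*(l:ℝ)))
          = Real.log ((l:ℝ)+1) - (Real.log (S:ℝ) + Real.log (l:ℝ)) := by
        rw [Real.log_div (by positivity) (by positivity), Real.log_mul hS0.ne' hx0.ne']
      have e13 : Real.log (((S:ℝ)*(l:ℝ)+((n:ℝ)-1))/((S:ℝ)*(l:ℝ)))
          = Real.log ((S:ℝ)*(l:ℝ)+((n:ℝ)-1)) - (Real.log (S:ℝ) + Real.log (l:ℝ)) := by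
        rw [Real.log_div hSN.ne' (by positivity), Real.log_mul hS0.ne' hx0.ne']
      have e1 : Real.log (h l) = Real.log (f l) - Real.log (g l) := by
        show Real.log (f l / g l) = _
        exact Real.log_div (hf l).ne' (hg l).ne'
      rw [e1, e4, Finset.sum_congr rfl (fun i _ => e5 i), e14, e6, e2, e3, hEdef, hΦdef]
      simp only []
      rw [e10, e11, e12, e13]
      ring
    have hlogten := hTten.congr' (EventuallyEq.symm heq)
    obtain ⟨ℓT, hlogten'⟩ : ∃ L, Tendsto (fun l : ℕ => Real.log (h l)) atTop (𝓝 L) :=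
      ⟨_, hlogten⟩
    exact ⟨Real.exp ℓT, Real.exp_pos _,
      ((Real.continuous_exp.tendsto _).comp hlogten').congr
        (fun l => Real.exp_log (hhpos l))⟩
  obtain ⟨L, hL, hten⟩ := hmain
  obtain ⟨c, C, hc, hC, hbnd⟩ := aux_bounds h L hL hhpos hten
  refine ⟨c, C, hc, hC, fun l => ?_⟩
  obtain ⟨h1, h2⟩ := hbnd l
  have hgl := hg l
  constructor
  · have h3 := (le_div_iff₀ hgl).mp h1
    calc c * ((l : ℝ) + 1) ^ E * μ ^ (-(l:ℝ)) = c * g l := by rw [hgdef]; ring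
    _ ≤ f l := h3
  · have h3 := (div_le_iff₀ hgl).mp h2
    calc f l ≤ C * g l := h3
    _ = C * ((l : ℝ) + 1) ^ E * μ ^ (-(l:ℝ)) := by rw [hgdef]; ring
end

section
/- Let n ≥ 1, 1 ≤ m ≤ n, M_1, …, M_m positive integers, μ = (M_1+…+M_m)^{M_1+…+M_m}/(M_1^{M_1}⋯M_m^{M_m}), α ∈ ℝ, and β(α) = α − n + (m+1)/2. There exist constants c, C > 0 (depending only on n, m, M, α) such that: for every holomorphic f on B_n of the diagonal form f(z) = Σ_{l=0}^∞ a_l·(z_1^{M_1}⋯z_m^{M_m})^l, one has c·Σ_{l=0}^∞ (l+1)^{β(α)}·μ^{−l}·|a_l|² ≤ ‖f‖²_α ≤ C·Σ_{l=0}^∞ (l+1)^{β(α)}·μ^{−l}·|a_l|² (as inequalities in [0,∞]). Equivalently, ‖f‖_α is comparable to the d_{β(α)}-norm of the one-variable function f̃(w) = Σ_l μ^{−l/4} a_l w^l determined by f(z) = f̃(μ^{1/4} z_1^{M_1}⋯z_m^{M_m}). -/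
open MeasureTheory
open scoped ENNReal Classical

noncomputable section

/-- The ambient space `ℂⁿ` with the Euclidean norm; the unit ball `𝔹ₙ` is
`Metric.ball (0 : En n) 1` and the unit sphere `𝕊ₙ` is `Metric.sphere (0 : En n) 1`. -/
abbrev En (n : ℕ) := EuclideanSpace ℂ (Fin n)

/-- Lebesgue measure on `ℂⁿ`, transported along the definitional equality
`EuclideanSpace ℂ (Fin n) = (Fin n → ℂ)`. -/
noncomputable instance (n : ℕ) : MeasureSpace (En n) where
  toMeasurableSpace := MeasurableSpace.comap (WithLp.ofLp (p := 2)) inferInstance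
  volume := @Measure.map (Fin n → ℂ) (En n) inferInstance
    (MeasurableSpace.comap (WithLp.ofLp (p := 2)) inferInstance) (WithLp.toLp 2) volume

/-- `|k| = k₁ + … + kₙ` for a multi-index `k`. -/
def mOrd {n : ℕ} (k : Fin n → ℕ) : ℕ := ∑ i, k i

/-- `k! = k₁! ⋯ kₙ!` for a multi-index `k`. -/
def mFact {n : ℕ} (k : Fin n → ℕ) : ℕ := ∏ i, (k i).factorial

/-- `z^k = z₁^{k₁} ⋯ zₙ^{kₙ}` for a multi-index `k`. -/
def mPow {n : ℕ} (z : En n) (k : Fin n → ℕ) : ℂ := ∏ i, z i ^ k i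

/-- The weight `(n+|k|)^α · (n-1)!·k! / (n-1+|k|)!` appearing in the Dirichlet-type norm. -/
def dWeight (n : ℕ) (α : ℝ) (k : Fin n → ℕ) : ℝ :=
  ((n : ℝ) + mOrd k) ^ α * (((n - 1).factorial * mFact k : ℕ) : ℝ) /
    (((n - 1 + mOrd k).factorial : ℕ) : ℝ)

/-- The squared Dirichlet-type norm `‖·‖²_α` of a family of Taylor coefficients,
valued in `[0,∞]`. -/
def Dnorm2 (n : ℕ) (α : ℝ) (a : (Fin n → ℕ) → ℂ) : ℝ≥0∞ :=
  ∑' k : Fin n → ℕ, ENNReal.ofReal (dWeight n α k * ‖a k‖ ^ 2)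

/-- `a` is the family of power-series (Taylor) coefficients of `f` on the unit ball:
`f z = Σ_k a_k z^k` for every `z` in the ball. -/
def HasCoeffs (n : ℕ) (f : En n → ℂ) (a : (Fin n → ℕ) → ℂ) : Prop :=
  ∀ z ∈ Metric.ball (0 : En n) 1, HasSum (fun k => a k * mPow z k) (f z)

/-- The squared Dirichlet-type norm `‖f‖²_α` of a function, computed through its
power-series coefficients (which are unique when they exist). -/
def DnormF2 (n : ℕ) (α : ℝ) (f : En n → ℂ) : ℝ≥0∞ :=
  sInf {x | ∃ a, HasCoeffs n f a ∧ x = Dnorm2 n α a}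

/-- Membership in the Dirichlet-type space `D_α(𝔹ₙ)`. -/
def MemD (n : ℕ) (α : ℝ) (f : En n → ℂ) : Prop :=
  DifferentiableOn ℂ f (Metric.ball 0 1) ∧ ∃ a, HasCoeffs n f a ∧ Dnorm2 n α a < ⊤

/-- `f` is a cyclic vector of `D_α(𝔹ₙ)`: for every `ε > 0` there is a polynomial `q`
with `‖q·f - 1‖²_α < ε`. -/
def CyclicD (n : ℕ) (α : ℝ) (f : En n → ℂ) : Prop :=
  ∀ ε : ℝ, 0 < ε → ∃ q : MvPolynomial (Fin n) ℂ,
    DnormF2 n α (fun z => MvPolynomial.eval (fun i => z i) q * f z - 1) < ENNReal.ofReal ε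

/-- `μ = (M₁+…+M_m)^{M₁+…+M_m}/(M₁^{M₁}⋯M_m^{M_m})`. -/
def muVal (m : ℕ) (M : Fin m → ℕ) : ℝ :=
  (((∑ i, M i) ^ (∑ i, M i) : ℕ) : ℝ) / ∏ i, ((M i : ℝ) ^ M i)

/-- The diagonal multi-index `(M₁l, …, M_ml, 0, …, 0) ∈ ℕⁿ`. -/
def diagIdx {n m : ℕ} (hmn : m ≤ n) (M : Fin m → ℕ) (l : ℕ) : Fin n → ℕ :=
  fun i => if h : (i : ℕ) < m then M ⟨(i : ℕ), h⟩ * l else 0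

open Finset Filter Real
open scoped Topology

lemma fact_add_eq (d q : ℕ) : (d + q).factorial = q.factorial * ∏ j ∈ Finset.range d, (q + j + 1) := by
  induction d with
  | zero => simp
  | succ d ih =>
    rw [Finset.prod_range_succ, ← mul_assoc, ← ih,
      show d + 1 + q = (d + q) + 1 from by ring, Nat.factorial_succ]
    ring

lemma stirling_pos (k : ℕ) (hk : k ≠ 0) : 0 < Stirling.stirlingSeq k := by
  obtain ⟨k, rfl⟩ := Nat.exists_eq_succ_of_ne_zero hk
  exact Stirling.stirlingSeq'_pos k

lemma fact_eq_stirling (k : ℕ) (hk : k ≠ 0) :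
    (k.factorial : ℝ) = Stirling.stirlingSeq k * (Real.sqrt (2*k) * ((k:ℝ)/Real.exp 1)^k) := by
  have hk0 : 0 < (k:ℝ) := by exact_mod_cast Nat.pos_of_ne_zero hk
  rw [Stirling.stirlingSeq, div_mul_cancel₀]
  positivity

lemma mOrd_diag {n m : ℕ} (hmn : m ≤ n) (M : Fin m → ℕ) (l : ℕ) :
    mOrd (diagIdx hmn M l) = (∑ i, M i) * l := by
  unfold mOrd diagIdx
  rw [Fin.sum_univ_eq_sum_range (fun j => if h : j < m then M ⟨j, h⟩ * l else 0) n,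
    Finset.range_eq_Ico, ← Finset.sum_Ico_consecutive _ (Nat.zero_le m) hmn,
    Finset.sum_eq_zero (s := Finset.Ico m n) (fun j hj => dif_neg (by simp at hj; omega)),
    add_zero, ← Finset.range_eq_Ico, Finset.sum_mul,
    ← Fin.sum_univ_eq_sum_range (fun j => if h : j < m then M ⟨j, h⟩ * l else 0) m]
  exact Finset.sum_congr rfl fun i _ => by simp [i.isLt]

lemma mFact_diag {n m : ℕ} (hmn : m ≤ n) (M : Fin m → ℕ) (l : ℕ) :
    mFact (diagIdx hmn M l) = ∏ i, (M i * l).factorial := by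
  unfold mFact diagIdx
  rw [Fin.prod_univ_eq_prod_range
      (fun j => ((if h : j < m then M ⟨j, h⟩ * l else 0)).factorial) n,
    Finset.range_eq_Ico, ← Finset.prod_Ico_consecutive _ (Nat.zero_le m) hmn,
    Finset.prod_eq_one (s := Finset.Ico m n)
      (fun j hj => by rw [dif_neg (by simp at hj; omega)]; rfl),
    mul_one, ← Finset.range_eq_Ico,
    ← Fin.prod_univ_eq_prod_range
      (fun j => ((if h : j < m then M ⟨j, h⟩ * l else 0)).factorial) m]
  exact Finset.prod_congr rfl fun i _ => by simp [i.isLt]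

lemma diag_inj {n m : ℕ} (hm : 1 ≤ m) (hmn : m ≤ n) (M : Fin m → ℕ) (hM : ∀ i, 1 ≤ M i) :
    Function.Injective (diagIdx hmn M) := by
  intro l₁ l₂ h
  have := congrFun h ⟨0, lt_of_lt_of_le hm hmn⟩
  simp only [diagIdx] at this
  rw [dif_pos (show (0:ℕ) < m from hm), dif_pos (show (0:ℕ) < m from hm)] at this
  exact Nat.eq_of_mul_eq_mul_left (hM _) this

def Kconst (n : ℕ) {m : ℕ} (M : Fin m → ℕ) : ℝ :=
  ((n-1).factorial : ℝ) * (∏ i, Real.sqrt (2 * (M i:ℝ))) / Real.sqrt (2 * ((∑ i, M i : ℕ):ℝ))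

def psi (n : ℕ) {m : ℕ} (M : Fin m → ℕ) (α : ℝ) (x : ℝ) : ℝ :=
  ((n:ℝ)*x + ((∑ i, M i : ℕ):ℝ)) ^ α *
  (∏ j ∈ Finset.range (n-1), (((∑ i, M i : ℕ):ℝ) + ((j:ℝ)+1)*x))⁻¹ *
  (1+x) ^ (-(α - (n:ℝ) + ((m:ℝ)+1)/2))

theorem weight_eq (n m : ℕ) (hn : 1 ≤ n) (hm : 1 ≤ m) (hmn : m ≤ n)
    (M : Fin m → ℕ) (hM : ∀ i, 1 ≤ M i) (α : ℝ) (l : ℕ) (hl : l ≠ 0) :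
    dWeight n α (diagIdx hmn M l) =
      (Kconst n M *
        ((∏ i, Stirling.stirlingSeq (M i * l)) / Stirling.stirlingSeq ((∑ i, M i) * l)) *
        psi n M α (1/(l:ℝ))) *
      (((l:ℝ)+1) ^ (α - (n:ℝ) + ((m:ℝ)+1)/2) * (muVal m M) ^ (-(l:ℝ))) := by
  have hS1 : 1 ≤ ∑ i, M i := by
    calc 1 ≤ m := hm
    _ = ∑ _i : Fin m, 1 := by simp
    _ ≤ ∑ i, M i := Finset.sum_le_sum (fun i _ => hM i)
  set S := ∑ i, M i with hSdef
  have hS : S ≠ 0 := by omega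
  have hl0 : 0 < (l:ℝ) := by exact_mod_cast Nat.pos_of_ne_zero hl
  have hSl : S * l ≠ 0 := by positivity
  have hSr : 0 < (S:ℝ) := by exact_mod_cast Nat.pos_of_ne_zero hS
  set β := α - (n:ℝ) + ((m:ℝ)+1)/2 with hβ
  set lr := (l:ℝ) with hlr
  -- factorial expansions
  have hfact1 : (((n - 1 + S * l).factorial : ℕ) : ℝ) =
      ((S*l).factorial : ℝ) * ∏ j ∈ range (n-1), ((S:ℝ)*lr + (j:ℝ) + 1) := by
    rw [fact_add_eq]
    push_cast
    ring
  have hfact2 : ((S*l).factorial : ℝ) =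
      Stirling.stirlingSeq (S*l) *
        (Real.sqrt (2*(S:ℝ)) * Real.sqrt lr * ((S:ℝ)^(S*l) * (lr/Real.exp 1)^(S*l))) := by
    rw [fact_eq_stirling _ hSl]
    have h1 : ((S*l : ℕ):ℝ) = (S:ℝ) * lr := by push_cast; ring
    rw [h1]
    rw [show (2:ℝ)*((S:ℝ)*lr) = (2*(S:ℝ))*lr by ring,
      Real.sqrt_mul (by positivity),
      show (S:ℝ)*lr/Real.exp 1 = (S:ℝ) * (lr/Real.exp 1) by ring, mul_pow]
    try ring
  have hfact3 : ((∏ i, (M i * l).factorial : ℕ) : ℝ) =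
      (∏ i, Stirling.stirlingSeq (M i * l)) *
        ((∏ i, Real.sqrt (2*(M i:ℝ))) * (Real.sqrt lr)^m *
          ((∏ i, (M i:ℝ)^(M i * l)) * (lr/Real.exp 1)^(S*l))) := by
    push_cast
    rw [Finset.prod_congr rfl (fun i _ => fact_eq_stirling (M i * l) (by have := hM i; positivity))]
    rw [Finset.prod_mul_distrib, Finset.prod_mul_distrib]
    have h1 : ∀ i : Fin m, Real.sqrt (2*((M i * l : ℕ):ℝ)) =
        Real.sqrt (2*(M i :ℝ)) * Real.sqrt lr := by
      intro i
      rw [show (2:ℝ)*((M i * l : ℕ):ℝ) = (2*(M i:ℝ))*lr by push_cast; ring,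
        Real.sqrt_mul (by positivity)]
    rw [Finset.prod_congr rfl (fun i _ => h1 i), Finset.prod_mul_distrib, Finset.prod_const,
      Finset.card_univ, Fintype.card_fin]
    have h2 : ∀ i : Fin m, (((M i * l : ℕ):ℝ)/Real.exp 1)^(M i * l) =
        (M i:ℝ)^(M i * l) * (lr/Real.exp 1)^(M i * l) := by
      intro i
      rw [show ((M i * l : ℕ):ℝ)/Real.exp 1 = (M i:ℝ) * (lr/Real.exp 1) by push_cast; ring,
        mul_pow]
    rw [Finset.prod_congr rfl (fun i _ => h2 i), Finset.prod_mul_distrib,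
      Finset.prod_pow_eq_pow_sum, ← Finset.sum_mul]
    try ring
  have hmu : (muVal m M) ^ (-(lr:ℝ)) = (∏ i, (M i:ℝ)^(M i * l)) / ((S:ℝ))^(S*l) := by
    have hprodpos : 0 < ∏ i, (M i:ℝ)^(M i) := by
      apply Finset.prod_pos; intro i _; have := hM i; positivity
    have hmupos : 0 < muVal m M := by
      unfold muVal
      apply div_pos _ hprodpos
      have : 0 < S ^ S := by positivity
      exact_mod_cast this
    have hpowl : muVal m M ^ (l:ℕ) = ((S:ℝ))^(S*l) / (∏ i, (M i:ℝ)^(M i * l)) := by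
      unfold muVal
      rw [div_pow]
      congr 1
      · rw [show (((S^S : ℕ)):ℝ) = (S:ℝ)^S by push_cast; rfl, ← pow_mul]
      · rw [← Finset.prod_pow]
        exact Finset.prod_congr rfl fun i _ => by rw [← pow_mul]
    rw [show (lr:ℝ) = ((l:ℕ):ℝ) from rfl, Real.rpow_neg hmupos.le, Real.rpow_natCast, hpowl,
      inv_div]
  -- rpow splittings
  have hA : ((n:ℝ) + ((S * l : ℕ):ℝ)) ^ α = lr^α * ((n:ℝ)*(1/lr) + (S:ℝ)) ^ α := by
    rw [← Real.mul_rpow hl0.le (by positivity)]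
    congr 1
    push_cast
    field_simp
    rfl
  have hB : (lr+1) ^ β = lr^β * (1 + 1/lr) ^ β := by
    rw [← Real.mul_rpow hl0.le (by positivity)]
    congr 1
    field_simp
  have hC : ∏ j ∈ range (n-1), ((S:ℝ)*lr + (j:ℝ) + 1) =
      lr^(n-1) * ∏ j ∈ range (n-1), ((S:ℝ) + ((j:ℝ)+1)*(1/lr)) := by
    calc ∏ j ∈ range (n-1), ((S:ℝ)*lr + (j:ℝ) + 1)
        = ∏ j ∈ range (n-1), (lr * ((S:ℝ) + ((j:ℝ)+1)*(1/lr))) := by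
          refine Finset.prod_congr rfl fun j _ => ?_
          field_simp
          ring
      _ = lr^(n-1) * ∏ j ∈ range (n-1), ((S:ℝ) + ((j:ℝ)+1)*(1/lr)) := by
          rw [Finset.prod_mul_distrib, Finset.prod_const, Finset.card_range]
  have hG : (1 + 1/lr) ^ (-β) = ((1 + 1/lr) ^ β)⁻¹ :=
    Real.rpow_neg (by positivity) β
  have hF : lr ^ α = (Real.sqrt lr * (lr:ℝ)^(n-1) * lr^β) / (Real.sqrt lr)^m := by
    have hsq : Real.sqrt lr = lr ^ (1/2:ℝ) := Real.sqrt_eq_rpow lr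
    rw [eq_div_iff (by positivity), hsq, ← Real.rpow_natCast (lr ^ (1/2:ℝ)) m,
      ← Real.rpow_natCast lr (n-1), ← Real.rpow_mul hl0.le,
      ← Real.rpow_add hl0, ← Real.rpow_add hl0, ← Real.rpow_add hl0]
    congr 1
    rw [hβ, Nat.cast_sub hn]
    push_cast
    ring
  -- assemble
  unfold dWeight
  rw [mOrd_diag, mFact_diag, Nat.cast_mul ((n - 1).factorial) (∏ i, (M i * l).factorial),
    hfact3, hfact1, hfact2, hA, hmu, hB, hC]
  unfold Kconst psi
  rw [← hSdef, ← hβ, hG, hF]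
  have hprodM : (0:ℝ) < ∏ i, (M i:ℝ)^(M i * l) := by
    apply Finset.prod_pos; intro i _; have := hM i; positivity
  have hprodQ : (0:ℝ) < ∏ j ∈ range (n-1), ((S:ℝ) + ((j:ℝ)+1)*(1/lr)) := by
    apply Finset.prod_pos; intro j _; positivity
  have hstirl : 0 < Stirling.stirlingSeq (S*l) := stirling_pos _ hSl
  have hsqlr : 0 < Real.sqrt lr := Real.sqrt_pos.2 hl0
  have hrpβ : 0 < lr ^ β := Real.rpow_pos_of_pos hl0 _
  have hrp1 : 0 < (1 + 1/lr) ^ β := Real.rpow_pos_of_pos (by positivity) _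
  have hle : 0 < (lr/Real.exp 1)^(S*l) := by positivity
  have hfac : (0:ℝ) < ((n-1).factorial : ℝ) := by exact_mod_cast Nat.factorial_pos _
  have hsqS : 0 < Real.sqrt (2*(S:ℝ)) := Real.sqrt_pos.2 (by positivity)
  field_simp

lemma sum_M_pos {m : ℕ} (hm : 1 ≤ m) (M : Fin m → ℕ) (hM : ∀ i, 1 ≤ M i) :
    1 ≤ ∑ i, M i := by
  calc 1 ≤ m := hm
  _ = ∑ _i : Fin m, 1 := by simp
  _ ≤ ∑ i, M i := Finset.sum_le_sum (fun i _ => hM i)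

lemma muVal_pos {m : ℕ} (hm : 1 ≤ m) (M : Fin m → ℕ) (hM : ∀ i, 1 ≤ M i) :
    0 < muVal m M := by
  unfold muVal
  apply div_pos
  · have : 0 < (∑ i, M i) ^ (∑ i, M i) := by
      have := sum_M_pos hm M hM; positivity
    exact_mod_cast this
  · apply Finset.prod_pos; intro i _; have := hM i; positivity

lemma dWeight_pos (n : ℕ) (hn : 1 ≤ n) (α : ℝ) (k : Fin n → ℕ) : 0 < dWeight n α k := by
  unfold dWeight
  have h1 : 0 < (n:ℝ) := by exact_mod_cast hn
  apply div_pos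
  · apply mul_pos (Real.rpow_pos_of_pos (by positivity) _)
    have : 0 < (n-1).factorial * mFact k :=
      Nat.mul_pos (Nat.factorial_pos _) (Finset.prod_pos fun i _ => Nat.factorial_pos _)
    exact_mod_cast this
  · exact_mod_cast Nat.factorial_pos _

lemma weight_bounds (n m : ℕ) (hn : 1 ≤ n) (hm : 1 ≤ m) (hmn : m ≤ n)
    (M : Fin m → ℕ) (hM : ∀ i, 1 ≤ M i) (α : ℝ) :
    ∃ c C : ℝ, 0 < c ∧ 0 < C ∧ ∀ l : ℕ,
      c * (((l:ℝ)+1) ^ (α - (n:ℝ) + ((m:ℝ)+1)/2) * (muVal m M) ^ (-(l:ℝ))) ≤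
        dWeight n α (diagIdx hmn M l) ∧
      dWeight n α (diagIdx hmn M l) ≤
        C * (((l:ℝ)+1) ^ (α - (n:ℝ) + ((m:ℝ)+1)/2) * (muVal m M) ^ (-(l:ℝ))) := by
  have hS1 : 1 ≤ ∑ i, M i := sum_M_pos hm M hM
  have hSr : 0 < ((∑ i, M i : ℕ):ℝ) := by exact_mod_cast hS1
  have hμ : 0 < muVal m M := muVal_pos hm M hM
  set g : ℕ → ℝ := fun l => ((l:ℝ)+1) ^ (α - (n:ℝ) + ((m:ℝ)+1)/2) * (muVal m M) ^ (-(l:ℝ))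
    with hgdef
  have hg : ∀ l, 0 < g l := fun l =>
    mul_pos (Real.rpow_pos_of_pos (by positivity) _) (Real.rpow_pos_of_pos hμ _)
  set w : ℕ → ℝ := fun l => dWeight n α (diagIdx hmn M l) with hwdef
  have hw : ∀ l, 0 < w l := fun l => dWeight_pos n hn α _
  set r : ℕ → ℝ := fun l => w l / g l with hrdef
  have hr : ∀ l, 0 < r l := fun l => div_pos (hw l) (hg l)
  -- the limit
  set L : ℝ := Kconst n M * ((Real.sqrt π)^m / Real.sqrt π) * psi n M α 0 with hLdef
  have hπ : 0 < Real.sqrt π := Real.sqrt_pos.2 Real.pi_pos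
  have hpsi0 : 0 < psi n M α 0 := by
    unfold psi
    apply mul_pos (mul_pos _ _)
    · exact Real.rpow_pos_of_pos (by norm_num) _
    · exact Real.rpow_pos_of_pos (by simpa using hSr) _
    · apply inv_pos.2
      apply Finset.prod_pos
      intro j _
      simpa using hSr
  have hL : 0 < L := by
    apply mul_pos (mul_pos _ (by positivity)) hpsi0
    unfold Kconst
    apply div_pos
    · apply mul_pos
      · exact_mod_cast Nat.factorial_pos _
      · apply Finset.prod_pos
        intro i _
        have h2 : (0:ℝ) < 2 * (M i:ℝ) := by have := hM i; positivity
        exact Real.sqrt_pos.2 h2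
    · exact Real.sqrt_pos.2 (by positivity)
  -- tendsto
  have hst : ∀ i : Fin m, Tendsto (fun l : ℕ => Stirling.stirlingSeq (M i * l)) atTop
      (𝓝 (Real.sqrt π)) := by
    intro i
    apply Stirling.tendsto_stirlingSeq_sqrt_pi.comp
    exact tendsto_atTop_mono (fun l => Nat.le_mul_of_pos_left l (hM i)) tendsto_id
  have hp : Tendsto (fun l : ℕ => ∏ i, Stirling.stirlingSeq (M i * l)) atTop
      (𝓝 ((Real.sqrt π)^m)) := by
    have := tendsto_finset_prod (f := fun (i : Fin m) (l : ℕ) => Stirling.stirlingSeq (M i * l))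
      (univ : Finset (Fin m)) (fun i _ => hst i)
    simpa using this
  have hq : Tendsto (fun l : ℕ => Stirling.stirlingSeq ((∑ i, M i) * l)) atTop
      (𝓝 (Real.sqrt π)) := by
    apply Stirling.tendsto_stirlingSeq_sqrt_pi.comp
    exact tendsto_atTop_mono (fun l => Nat.le_mul_of_pos_left l hS1) tendsto_id
  have hpsic : ContinuousAt (psi n M α) 0 := by
    unfold psi
    apply ContinuousAt.mul
    apply ContinuousAt.mul
    · apply ContinuousAt.rpow_const
      · fun_prop
      · left; simpa using hSr.ne'
    · apply ContinuousAt.inv₀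
      · exact (continuous_finset_prod _ (fun j _ => by fun_prop)).continuousAt
      · apply Finset.prod_ne_zero_iff.2
        intro j _
        simpa using hSr.ne'
    · apply ContinuousAt.rpow_const
      · fun_prop
      · left; norm_num
  have hpsit : Tendsto (fun l : ℕ => psi n M α (1/(l:ℝ))) atTop (𝓝 (psi n M α 0)) :=
    (hpsic.tendsto).comp tendsto_one_div_atTop_nhds_zero_nat
  have hφ : Tendsto (fun l : ℕ => Kconst n M *
      ((∏ i, Stirling.stirlingSeq (M i * l)) / Stirling.stirlingSeq ((∑ i, M i) * l)) *
      psi n M α (1/(l:ℝ))) atTop (𝓝 L) :=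
    (tendsto_const_nhds.mul (hp.div hq hπ.ne')).mul hpsit
  have hrt : Tendsto r atTop (𝓝 L) := by
    apply hφ.congr'
    filter_upwards [eventually_ge_atTop 1] with l hl
    rw [hrdef]
    simp only
    rw [hwdef]
    simp only
    rw [weight_eq n m hn hm hmn M hM α l (by omega), mul_div_assoc]
    rw [div_self (hg l).ne', mul_one]
  -- extract bounds
  have h1 : ∀ᶠ l in atTop, L/2 < r l := hrt.eventually_const_lt (by linarith)
  have h2 : ∀ᶠ l in atTop, r l < L*2 := hrt.eventually_lt_const (by linarith)
  obtain ⟨N, hN⟩ := (h1.and h2).exists_forall_of_atTop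
  have hne : (Finset.range (N+1)).Nonempty := ⟨N, Finset.self_mem_range_succ N⟩
  refine ⟨min (L/2) ((Finset.range (N+1)).inf' hne r),
    max (L*2) ((Finset.range (N+1)).sup' hne r), ?_, ?_, ?_⟩
  · apply lt_min (by linarith)
    exact (Finset.lt_inf'_iff hne).2 fun b _ => hr b
  · exact lt_max_iff.2 (Or.inl (by linarith))
  · intro l
    have hbounds : min (L/2) ((Finset.range (N+1)).inf' hne r) ≤ r l ∧
        r l ≤ max (L*2) ((Finset.range (N+1)).sup' hne r) := by
      rcases le_or_gt N l with hNl | hNl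
      · obtain ⟨ha, hb⟩ := hN l hNl
        exact ⟨(min_le_left _ _).trans ha.le, hb.le.trans (le_max_left _ _)⟩
      · have hmem : l ∈ Finset.range (N+1) := Finset.mem_range.2 (by omega)
        exact ⟨(min_le_right _ _).trans (Finset.inf'_le r hmem),
          (Finset.le_sup' r hmem).trans (le_max_right _ _)⟩
    obtain ⟨hlo, hhi⟩ := hbounds
    constructor
    · have := (le_div_iff₀ (hg l)).1 hlo
      exact this
    · have := (div_le_iff₀ (hg l)).1 hhi
      exact this

/-- for functions of the diagonal form
`f(z) = Σ_l a_l (z₁^{M₁}⋯z_m^{M_m})^l`, the squared norm `‖f‖²_α` is comparable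
(with constants depending only on `n, m, M, α`) to
`Σ_l (l+1)^{β(α)} μ^{-l} |a_l|²`, where `β(α) = α - n + (m+1)/2`. -/

theorem stmt_6 (n m : ℕ) (hn : 1 ≤ n) (hm : 1 ≤ m) (hmn : m ≤ n)
    (M : Fin m → ℕ) (hM : ∀ i, 1 ≤ M i) (α : ℝ) :
    ∃ c C : ℝ, 0 < c ∧ 0 < C ∧
      ∀ (f : En n → ℂ) (a : ℕ → ℂ) (A : (Fin n → ℕ) → ℂ),
        DifferentiableOn ℂ f (Metric.ball 0 1) →
        HasCoeffs n f A →
        (∀ l, A (diagIdx hmn M l) = a l) →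
        (∀ k, (∀ l, k ≠ diagIdx hmn M l) → A k = 0) →
        ENNReal.ofReal c *
            (∑' l : ℕ, ENNReal.ofReal (((l : ℝ) + 1) ^ (α - n + ((m : ℝ) + 1) / 2) *
              (muVal m M) ^ (-(l : ℝ)) * ‖a l‖ ^ 2)) ≤ Dnorm2 n α A ∧
          Dnorm2 n α A ≤ ENNReal.ofReal C *
            (∑' l : ℕ, ENNReal.ofReal (((l : ℝ) + 1) ^ (α - n + ((m : ℝ) + 1) / 2) *
              (muVal m M) ^ (-(l : ℝ)) * ‖a l‖ ^ 2)) := by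
  obtain ⟨c, C, hc, hC, hcomp⟩ := weight_bounds n m hn hm hmn M hM α
  refine ⟨c, C, hc, hC, ?_⟩
  intro f a A hf hA hdiag hoff
  have hinj := diag_inj hm hmn M hM
  have hDn : Dnorm2 n α A =
      ∑' l : ℕ, ENNReal.ofReal (dWeight n α (diagIdx hmn M l) * ‖a l‖^2) := by
    rw [Dnorm2]
    rw [← hinj.tsum_eq (f := fun k => ENNReal.ofReal (dWeight n α k * ‖A k‖^2)) ?_]
    · exact tsum_congr fun l => by rw [hdiag l]
    · intro k hk
      by_contra hnr
      have hzero : A k = 0 := by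
        apply hoff
        intro l hl
        exact hnr ⟨l, hl.symm⟩
      simp only [Function.mem_support] at hk
      apply hk
      rw [hzero]
      simp
  rw [hDn]
  constructor
  · rw [← ENNReal.tsum_mul_left]
    apply ENNReal.tsum_le_tsum
    intro l
    rw [← ENNReal.ofReal_mul hc.le]
    apply ENNReal.ofReal_le_ofReal
    calc c * (((l:ℝ)+1) ^ (α - (n:ℝ) + ((m:ℝ)+1)/2) * (muVal m M) ^ (-(l:ℝ)) * ‖a l‖^2)
        = (c * (((l:ℝ)+1) ^ (α - (n:ℝ) + ((m:ℝ)+1)/2) * (muVal m M) ^ (-(l:ℝ)))) * ‖a l‖^2 := by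
          ring
      _ ≤ dWeight n α (diagIdx hmn M l) * ‖a l‖^2 :=
          mul_le_mul_of_nonneg_right (hcomp l).1 (by positivity)
  · rw [← ENNReal.tsum_mul_left]
    apply ENNReal.tsum_le_tsum
    intro l
    rw [← ENNReal.ofReal_mul hC.le]
    apply ENNReal.ofReal_le_ofReal
    calc dWeight n α (diagIdx hmn M l) * ‖a l‖^2
        ≤ (C * (((l:ℝ)+1) ^ (α - (n:ℝ) + ((m:ℝ)+1)/2) * (muVal m M) ^ (-(l:ℝ)))) * ‖a l‖^2 :=
          mul_le_mul_of_nonneg_right (hcomp l).2 (by positivity)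
      _ = C * (((l:ℝ)+1) ^ (α - (n:ℝ) + ((m:ℝ)+1)/2) * (muVal m M) ^ (-(l:ℝ)) * ‖a l‖^2) := by
          ring
end
end
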